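/- Let x = a r b and y = a' s b' be distinct sequences of length m ≥ 2 over a q-ary alphabet, where a ≠ a' and b ≠ b' are single symbols and r, s are sequences of length m−2. If the Levenshtein distance between x and y is at least 4, then |I_2(x) ∩ I_2(y)| ≤ 6. -/

import Mathlib

/-- The t-insertion ball: length-(|x|+t) supersequences of x. -/
def iBall {α : Type*} (t : ℕ) (x : List α) : Set (List α) :=
  {z | x.Sublist z ∧ z.length = x.length + t}

private lemma ne_head_sub {α : Type*} {c e : α} {l t : List α}
    (h : (c :: l).Sublist (e :: t)) (hne : c ≠ e) : (c :: l).Sublist t := by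
  cases h with
  | cons _ h => exact h
  | cons_cons => exact absurd rfl hne

private lemma ne_last_sub {α : Type*} {c f : α} {l t : List α}
    (h : (l ++ [c]).Sublist (t ++ [f])) (hne : c ≠ f) : (l ++ [c]).Sublist t := by
  rw [← List.reverse_sublist] at h ⊢
  simp only [List.reverse_append, List.reverse_singleton, List.singleton_append] at h ⊢
  exact ne_head_sub h hne

private lemma last_cancel {α : Type*} {c : α} {l t : List α}
    (h : (l ++ [c]).Sublist (t ++ [c])) : l.Sublist t := by
  rw [← List.reverse_sublist] at h ⊢
  simp only [List.reverse_append, List.reverse_singleton, List.singleton_append] at h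
  exact List.cons_sublist_cons.mp h

private lemma two_supers {α : Type*} : ∀ (u v : List α), u ≠ v → u.length = v.length →
    ∃ w₁ w₂ : List α, ∀ w, u.Sublist w → v.Sublist w → w.length = u.length + 1 →
      w = w₁ ∨ w = w₂ := by
  intro u
  induction u with
  | nil =>
    intro v hne hlen
    cases v with
    | nil => exact absurd rfl hne
    | cons d v₀ => simp at hlen
  | cons c u₀ ih =>
    intro v hne hlen
    cases v with
    | nil => simp at hlen
    | cons d v₀ =>
      by_cases hcd : c = d
      · subst hcd
        have hne₀ : u₀ ≠ v₀ := fun h => hne (by rw [h])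
        have hlen₀ : u₀.length = v₀.length := by simpa using hlen
        obtain ⟨w₁, w₂, hP⟩ := ih v₀ hne₀ hlen₀
        refine ⟨c :: w₁, c :: w₂, ?_⟩
        intro w hu hv hw
        cases w with
        | nil => simp at hw
        | cons e w₀ =>
          by_cases hec : e = c
          · subst hec
            rcases hP w₀ (List.cons_sublist_cons.mp hu) (List.cons_sublist_cons.mp hv)
                (by simpa using hw) with h | h
            · left; rw [h]
            · right; rw [h]
          · have h1 : (c :: u₀).Sublist w₀ := ne_head_sub hu (fun h => hec h.symm)
            have h2 : (c :: v₀).Sublist w₀ := ne_head_sub hv (fun h => hec h.symm)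
            have hl1 : (c :: u₀).length = w₀.length := by simp at hw ⊢; omega
            have hl2 : (c :: v₀).length = w₀.length := by simp at hw ⊢; omega
            have e1 : c :: u₀ = w₀ := h1.eq_of_length hl1
            have e2 : c :: v₀ = w₀ := h2.eq_of_length hl2
            exact absurd (by simpa using e1.trans e2.symm) hne₀
      · refine ⟨c :: d :: v₀, d :: c :: u₀, ?_⟩
        intro w hu hv hw
        cases w with
        | nil => simp at hw
        | cons e w₀ =>
          have hlw : w₀.length = u₀.length + 1 := by simp at hw; omega
          have hlv : v₀.length = u₀.length := by simp at hlen; omega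
          by_cases hec : e = c
          · subst hec
            have h2 : (d :: v₀).Sublist w₀ := ne_head_sub hv (fun h => hcd h.symm)
            have e2 : d :: v₀ = w₀ := h2.eq_of_length (by simp [hlw, hlv])
            left; rw [← e2]
          · by_cases hed : e = d
            · subst hed
              have h1 : (c :: u₀).Sublist w₀ := ne_head_sub hu hcd
              have e1 : c :: u₀ = w₀ := h1.eq_of_length (by simp [hlw])
              right; rw [← e1]
            · have h1 : (c :: u₀).Sublist w₀ := ne_head_sub hu (fun h => hec h.symm)
              have h2 : (d :: v₀).Sublist w₀ := ne_head_sub hv (fun h => hed h.symm)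
              have e1 : c :: u₀ = w₀ := h1.eq_of_length (by simp [hlw])
              have e2 : d :: v₀ = w₀ := h2.eq_of_length (by simp [hlw, hlv])
              have : c = d := by
                have := e1.trans e2.symm
                exact (List.cons.injEq _ _ _ _ ▸ this).1
              exact absurd this hcd

private lemma ncard_le_six {β : Type*} (t1 t2 t3 t4 t5 t6 : β) :
    ({t1, t2, t3, t4, t5, t6} : Set β).ncard ≤ 6 := by
  refine le_trans (Set.ncard_insert_le _ _) ?_
  have h2 := Set.ncard_insert_le t2 ({t3, t4, t5, t6} : Set β)
  have h3 := Set.ncard_insert_le t3 ({t4, t5, t6} : Set β)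
  have h4 := Set.ncard_insert_le t4 ({t5, t6} : Set β)
  have h5 := Set.ncard_insert_le t5 ({t6} : Set β)
  have h6 : ({t6} : Set β).ncard = 1 := Set.ncard_singleton t6
  omega

theorem stmt_10 (q m : ℕ) (hm : 2 ≤ m) (a a' b b' : Fin q) (r s : List (Fin q))
    (ha : a ≠ a') (hb : b ≠ b')
    (x y : List (Fin q))
    (hx : x = a :: r ++ [b]) (hy : y = a' :: s ++ [b'])
    (hxm : x.length = m) (hym : y.length = m) (hxy : x ≠ y)
    (hdist : iBall 1 x ∩ iBall 1 y = ∅) :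
    (iBall 2 x ∩ iBall 2 y).ncard ≤ 6 := by
  classical
  have hx' : x = a :: (r ++ [b]) := by rw [hx]; simp
  have hy' : y = a' :: (s ++ [b']) := by rw [hy]; simp
  have hx'' : x = (a :: r) ++ [b] := hx
  have hy'' : y = (a' :: s) ++ [b'] := hy
  have hrl : r.length + 2 = m := by rw [hx] at hxm; simp at hxm; omega
  have hsl : s.length + 2 = m := by rw [hy] at hym; simp at hym; omega
  have hnmem : ∀ w : List (Fin q), x.Sublist w → y.Sublist w → w.length = m + 1 → False := by
    intro w h1 h2 h3
    have hw : w ∈ iBall 1 x ∩ iBall 1 y :=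
      ⟨⟨h1, by rw [hxm]; exact h3⟩, ⟨h2, by rw [hym]; exact h3⟩⟩
    rw [hdist] at hw
    exact hw
  -- distinctness of the inner pairs
  have hd₁ : r ++ [b] ≠ a' :: s := by
    intro h
    refine hnmem ((a :: (a' :: s)) ++ [b']) ?_ ?_ ?_
    · rw [hx', h]; exact List.sublist_append_left _ _
    · rw [hy'']
      exact List.Sublist.append_right (List.sublist_cons_self a (a' :: s)) [b']
    · simp; omega
  have hd₂ : a :: r ≠ s ++ [b'] := by
    intro h
    refine hnmem ((a' :: (a :: r)) ++ [b]) ?_ ?_ ?_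
    · rw [hx'']
      exact List.Sublist.append_right (List.sublist_cons_self a' (a :: r)) [b]
    · rw [hy', ← h]; exact List.sublist_append_left _ _
    · simp; omega
  obtain ⟨w₁, w₂, hP₁⟩ := two_supers (r ++ [b]) (a' :: s) hd₁ (by simp; omega)
  obtain ⟨w₃, w₄, hP₂⟩ := two_supers (a :: r) (s ++ [b']) hd₂ (by simp; omega)
  set T : Set (List (Fin q)) :=
    {a :: (y ++ [b]), a' :: (x ++ [b']), a :: (w₁ ++ [b']), a :: (w₂ ++ [b']),
     a' :: (w₃ ++ [b]), a' :: (w₄ ++ [b])} with hT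
  have hsub : iBall 2 x ∩ iBall 2 y ⊆ T := by
    rintro z ⟨⟨hxz, hzl⟩, hyz, -⟩
    have hzlen : z.length = m + 2 := by rw [hxm] at hzl; exact hzl
    obtain ⟨e, z', rfl⟩ : ∃ e z', z = e :: z' := by
      cases z with
      | nil => simp at hzlen
      | cons e z' => exact ⟨e, z', rfl⟩
    have hz'len : z'.length = m + 1 := by simp at hzlen; omega
    have hz'ne : z' ≠ [] := by intro h; rw [h] at hz'len; simp at hz'len
    obtain ⟨mid, f, rfl⟩ : ∃ mid f, z' = mid ++ [f] :=
      ⟨_, _, (List.dropLast_append_getLast hz'ne).symm⟩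
    have hmidlen : mid.length = m := by simp at hz'len; omega
    have he : a = e ∨ a' = e := by
      by_contra hcon
      push_neg at hcon
      refine hnmem (mid ++ [f]) ?_ ?_ ?_
      · rw [hx'] at hxz ⊢
        exact ne_head_sub hxz hcon.1
      · rw [hy'] at hyz ⊢
        exact ne_head_sub hyz hcon.2
      · exact hz'len
    have hf : b = f ∨ b' = f := by
      by_contra hcon
      push_neg at hcon
      refine hnmem (e :: mid) ?_ ?_ ?_
      · rw [hx''] at hxz ⊢
        have h1 : ((a :: r) ++ [b]).Sublist ((e :: mid) ++ [f]) := by simpa using hxz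
        exact ne_last_sub h1 hcon.1
      · rw [hy''] at hyz ⊢
        have h1 : ((a' :: s) ++ [b']).Sublist ((e :: mid) ++ [f]) := by simpa using hyz
        exact ne_last_sub h1 hcon.2
      · simp; omega
    rcases he with rfl | rfl <;> rcases hf with rfl | rfl
    · -- e = a, f = b : forces mid = y
      have h1 : (a' :: (s ++ [b'])).Sublist (mid ++ [b]) := by
        rw [hy'] at hyz
        exact ne_head_sub hyz (Ne.symm ha)
      have h2 : ((a' :: s) ++ [b']).Sublist mid :=
        ne_last_sub (by simpa using h1) (Ne.symm hb)
      have h3 : y = mid := by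
        rw [hy'']
        exact h2.eq_of_length (by rw [← hy'']; omega)
      simp only [hT, Set.mem_insert_iff, Set.mem_singleton_iff]
      exact Or.inl (by rw [h3])
    · -- e = a, f = b' : use hP₁
      have h1 : (r ++ [b]).Sublist mid := by
        rw [hx'] at hxz
        exact ne_last_sub (List.cons_sublist_cons.mp hxz) hb
      have h2 : (a' :: s).Sublist mid := by
        rw [hy'] at hyz
        have h0 : (a' :: (s ++ [b'])).Sublist (mid ++ [b']) := ne_head_sub hyz (Ne.symm ha)
        exact last_cancel (by simpa using h0)
      simp only [hT, Set.mem_insert_iff, Set.mem_singleton_iff]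
      rcases hP₁ mid h1 h2 (by simp; omega) with h | h
      · exact Or.inr (Or.inr (Or.inl (by rw [h])))
      · exact Or.inr (Or.inr (Or.inr (Or.inl (by rw [h]))))
    · -- e = a', f = b : use hP₂
      have h1 : (a :: r).Sublist mid := by
        rw [hx'] at hxz
        have h0 : (a :: (r ++ [b])).Sublist (mid ++ [b]) := ne_head_sub hxz ha
        exact last_cancel (by simpa using h0)
      have h2 : (s ++ [b']).Sublist mid := by
        rw [hy'] at hyz
        exact ne_last_sub (List.cons_sublist_cons.mp hyz) (Ne.symm hb)
      simp only [hT, Set.mem_insert_iff, Set.mem_singleton_iff]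
      rcases hP₂ mid h1 h2 (by simp; omega) with h | h
      · exact Or.inr (Or.inr (Or.inr (Or.inr (Or.inl (by rw [h])))))
      · exact Or.inr (Or.inr (Or.inr (Or.inr (Or.inr (by rw [h])))))
    · -- e = a', f = b' : forces mid = x
      have h1 : (a :: (r ++ [b])).Sublist (mid ++ [b']) := by
        rw [hx'] at hxz
        exact ne_head_sub hxz ha
      have h2 : ((a :: r) ++ [b]).Sublist mid :=
        ne_last_sub (by simpa using h1) hb
      have h3 : x = mid := by
        rw [hx'']
        exact h2.eq_of_length (by rw [← hx'']; omega)
      simp only [hT, Set.mem_insert_iff, Set.mem_singleton_iff]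
      exact Or.inr (Or.inl (by rw [h3]))
  have hTfin : T.Finite := by
    rw [hT]
    exact (((((Set.finite_singleton _).insert _).insert _).insert _).insert _).insert _
  calc (iBall 2 x ∩ iBall 2 y).ncard ≤ T.ncard := Set.ncard_le_ncard hsub hTfin
    _ ≤ 6 := by rw [hT]; exact ncard_le_six _ _ _ _ _ _
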